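/- Let 1 ≤ k < m be integers and let x_1, …, x_m ≥ 0 be nonnegative real numbers. Then ( σ_m^k(x_1, …, x_m) / binom(m, k) )^{1/k} ≥ ( σ_m^{k+1}(x_1, …, x_m) / binom(m, k+1) )^{1/(k+1)}, with equality if and only if all the x_i are equal, or at least m−k+1 of them are zero. -/

import Mathlib

open Polynomial in
lemma deriv_step (n : ℕ) (hn : 1 ≤ n) (s : Multiset ℝ) (hs : Multiset.card s = n) :
    ∃ t : Multiset ℝ, Multiset.card t = n - 1 ∧
      ∀ j ≤ n - 1, (n : ℝ) * t.esymm j = ((n - j : ℕ) : ℝ) * s.esymm j := by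
  set p : ℝ[X] := (s.map fun a => X - C a).prod with hp
  have hmonic : p.Monic :=
    monic_multiset_prod_of_monic _ _ fun a _ => monic_X_sub_C a
  have hdeg : p.natDegree = n := by
    rw [hp, natDegree_multiset_prod_X_sub_C_eq_card, hs]
  have hroots : p.roots = s := roots_multiset_prod_X_sub_C s
  have hco : (derivative p).coeff (n - 1) = (n : ℝ) := by
    rw [coeff_derivative]
    have e1 : n - 1 + 1 = n := by omega
    rw [e1, ← hdeg, hmonic.coeff_natDegree, one_mul, hdeg]
    have : ((n - 1 : ℕ) : ℝ) = (n : ℝ) - 1 := by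
      have : (1:ℕ) ≤ n := hn
      push_cast [this]
      ring
    rw [this]; ring
  have hddeg : (derivative p).natDegree = n - 1 := by
    refine le_antisymm ((natDegree_derivative_le p).trans_eq (by rw [hdeg]))
      (le_natDegree_of_ne_zero ?_)
    rw [hco]
    have : (0:ℝ) < n := by exact_mod_cast hn
    exact this.ne'
  have hcard : Multiset.card (derivative p).roots = n - 1 := by
    have h1 := card_roots' (derivative p)
    have h2 := p.card_roots_le_derivative
    rw [hroots, hs] at h2
    omega
  have hlc : (derivative p).leadingCoeff = (n : ℝ) := by
    rw [leadingCoeff, hddeg, hco]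
  refine ⟨(derivative p).roots, hcard, fun j hj => ?_⟩
  have h1 : (derivative p).coeff (n - 1 - j) = p.coeff (n - j) * ((n - j : ℕ) : ℝ) := by
    rw [coeff_derivative]
    have e1 : n - 1 - j + 1 = n - j := by omega
    rw [e1]
    push_cast [e1.symm]
    norm_num
  have h2 : p.coeff (n - j) = (-1 : ℝ) ^ j * s.esymm j := by
    have hk : n - j ≤ Multiset.card s := by omega
    have h := Multiset.prod_X_sub_C_coeff s hk
    have e2 : Multiset.card s - (n - j) = j := by omega
    rw [e2] at h
    exact h
  have h3 : (derivative p).coeff (n - 1 - j) =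
      (n : ℝ) * ((-1 : ℝ) ^ j * ((derivative p).roots.esymm j)) := by
    have hle : n - 1 - j ≤ (derivative p).natDegree := by omega
    have h := Polynomial.coeff_eq_esymm_roots_of_card (by rw [hcard, hddeg]) hle
    rw [h, hlc, hddeg]
    have e3 : n - 1 - (n - 1 - j) = j := by omega
    rw [e3]; ring
  have hne : (-1 : ℝ) ^ j ≠ 0 := by positivity
  refine mul_left_cancel₀ hne ?_
  rw [h2] at h1
  rw [h1] at h3
  linear_combination -h3

lemma choose_id (N j : ℕ) (h1 : 1 ≤ N) (hj : j ≤ N - 1) :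
    (N - j) * N.choose j = N * (N - 1).choose j := by
  have h2 := Nat.choose_succ_right_eq N j
  have h3 := Nat.add_one_mul_choose_eq (N - 1) j
  have e : N - 1 + 1 = N := by omega
  rw [e] at h3
  calc (N - j) * N.choose j = N.choose j * (N - j) := Nat.mul_comm _ _
    _ = N.choose (j + 1) * (j + 1) := h2.symm
    _ = N * (N - 1).choose j := h3.symm

lemma descend (n d : ℕ) (hd : d ≤ n) (s : Multiset ℝ) (hs : Multiset.card s = n) :
    ∃ t : Multiset ℝ, Multiset.card t = n - d ∧
      ∀ j ≤ n - d, (n.choose j : ℝ) * t.esymm j = (((n - d).choose j : ℝ)) * s.esymm j := by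
  induction d with
  | zero => exact ⟨s, by simpa using hs, fun j hj => by norm_num⟩
  | succ d ih =>
    obtain ⟨t, ht, htj⟩ := ih (by omega)
    obtain ⟨u, hu, huj⟩ := deriv_step (n - d) (by omega) t ht
    refine ⟨u, by omega, fun j hj => ?_⟩
    have hj' : j ≤ n - d - 1 := by omega
    have h1 := huj j hj'
    have h2 := htj j (by omega)
    have hN : (0 : ℝ) < ((n - d : ℕ) : ℝ) := by
      have : 0 < n - d := by omega
      exact_mod_cast this
    refine mul_left_cancel₀ hN.ne' ?_
    have hcid : ((n - d - j) * (n - d).choose j : ℕ) = ((n - d) * (n - d - 1).choose j : ℕ) :=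
      choose_id (n - d) j (by omega) hj'
    have hcid' : ((n - d - j : ℕ) : ℝ) * ((n - d).choose j : ℝ) =
        ((n - d : ℕ) : ℝ) * ((n - d - 1).choose j : ℝ) := by exact_mod_cast hcid
    have e1 : n - d - 1 = n - (d + 1) := by omega
    calc ((n - d : ℕ) : ℝ) * ((n.choose j : ℝ) * u.esymm j)
        = (n.choose j : ℝ) * (((n - d : ℕ) : ℝ) * u.esymm j) := by ring
      _ = (n.choose j : ℝ) * (((n - d - j : ℕ) : ℝ) * t.esymm j) := by rw [h1]
      _ = ((n - d - j : ℕ) : ℝ) * ((n.choose j : ℝ) * t.esymm j) := by ring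
      _ = ((n - d - j : ℕ) : ℝ) * (((n - d).choose j : ℝ) * s.esymm j) := by rw [h2]
      _ = (((n - d - j : ℕ) : ℝ) * ((n - d).choose j : ℝ)) * s.esymm j := by ring
      _ = (((n - d : ℕ) : ℝ) * ((n - (d+1)).choose j : ℝ)) * s.esymm j := by
          rw [hcid', e1]
      _ = ((n - d : ℕ) : ℝ) * (((n - (d+1)).choose j : ℝ) * s.esymm j) := by ring

section VarLemmas
variable {ι : Type*} [DecidableEq ι]

lemma pc1_sum (s : Finset ι) (G : Finset ι → ℝ) :
    ∑ Q ∈ s.powersetCard 1, G Q = ∑ y ∈ s, G {y} := by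
  rw [Finset.powersetCard_one, Finset.sum_map]
  rfl

lemma pc2_insert_sum (s : Finset ι) {x : ι} (hx : x ∉ s) (F : Finset ι → ℝ) :
    ∑ P ∈ (insert x s).powersetCard 2, F P =
      (∑ P ∈ s.powersetCard 2, F P) + ∑ y ∈ s, F {x, y} := by
  rw [Finset.powersetCard_succ_insert hx, Finset.sum_union, Finset.sum_image]
  · rw [pc1_sum s (fun Q => F (insert x Q))]
  · intro Q1 h1 Q2 h2 he
    have hq1 : x ∉ Q1 := fun h => hx ((Finset.mem_powersetCard.1 h1).1 h)
    have hq2 : x ∉ Q2 := fun h => hx ((Finset.mem_powersetCard.1 h2).1 h)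
    have := congrArg (fun P => Finset.erase P x) he
    simpa [Finset.erase_insert hq1, Finset.erase_insert hq2] using this
  · rw [Finset.disjoint_left]
    intro P hP hP'
    obtain ⟨Q, _, rfl⟩ := Finset.mem_image.1 hP'
    exact hx ((Finset.mem_powersetCard.1 hP).1 (Finset.mem_insert_self x Q))

lemma pc2_empty : (∅ : Finset ι).powersetCard 2 = ∅ := by
  ext P
  simp only [Finset.mem_powersetCard, Finset.subset_empty, Finset.notMem_empty, iff_false]
  rintro ⟨rfl, h⟩
  simp at h

lemma I1 (s : Finset ι) (h : ι → ℝ) :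
    ∑ P ∈ s.powersetCard 2, ∑ i ∈ P, h i = ((s.card : ℝ) - 1) * ∑ i ∈ s, h i := by
  induction s using Finset.induction_on with
  | empty => simp [pc2_empty]
  | @insert x s hx ih =>
    rw [pc2_insert_sum s hx, ih]
    have hpair : ∀ y ∈ s, ∑ i ∈ ({x, y} : Finset ι), h i = h x + h y := by
      intro y hy
      exact Finset.sum_pair fun he => hx (he ▸ hy)
    rw [Finset.sum_congr rfl hpair, Finset.sum_add_distrib, Finset.sum_const,
      Finset.sum_insert hx, Finset.card_insert_of_notMem hx]
    push_cast
    ring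

lemma I2 (s : Finset ι) (a : ι → ℝ) :
    2 * ∑ P ∈ s.powersetCard 2, ∏ i ∈ P, a i =
      (∑ i ∈ s, a i) ^ 2 - ∑ i ∈ s, (a i) ^ 2 := by
  induction s using Finset.induction_on with
  | empty => simp [pc2_empty]
  | @insert x s hx ih =>
    rw [pc2_insert_sum s hx]
    have hpair : ∀ y ∈ s, ∏ i ∈ ({x, y} : Finset ι), a i = a x * a y := by
      intro y hy
      exact Finset.prod_pair fun he => hx (he ▸ hy)
    rw [Finset.sum_congr rfl hpair, ← Finset.mul_sum, Finset.sum_insert hx,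
      Finset.sum_insert hx]
    nlinarith [ih]

lemma varK (s : Finset ι) (a : ι → ℝ) :
    2 * (s.card : ℝ) * ∑ P ∈ s.powersetCard 2, ∏ i ∈ P, a i ≤
      ((s.card : ℝ) - 1) * (∑ i ∈ s, a i) ^ 2 ∧
    (2 * (s.card : ℝ) * ∑ P ∈ s.powersetCard 2, ∏ i ∈ P, a i =
      ((s.card : ℝ) - 1) * (∑ i ∈ s, a i) ^ 2 ↔ ∀ i ∈ s, ∀ j ∈ s, a i = a j) := by
  have key : ((s.card : ℝ) - 1) * (∑ i ∈ s, a i) ^ 2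
      - 2 * (s.card : ℝ) * ∑ P ∈ s.powersetCard 2, ∏ i ∈ P, a i
      = ∑ P ∈ s.powersetCard 2, (2 * (∑ i ∈ P, (a i) ^ 2) - (∑ i ∈ P, a i) ^ 2) := by
    have e1 : ∀ P ∈ s.powersetCard 2,
        2 * (∑ i ∈ P, (a i) ^ 2) - (∑ i ∈ P, a i) ^ 2
          = (∑ i ∈ P, (a i) ^ 2) - 2 * ∏ i ∈ P, a i := by
      intro P hP
      obtain ⟨u, v, huv, rfl⟩ := Finset.card_eq_two.1 (Finset.mem_powersetCard.1 hP).2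
      rw [Finset.sum_pair huv, Finset.sum_pair huv, Finset.prod_pair huv]
      ring
    rw [Finset.sum_congr rfl e1, Finset.sum_sub_distrib, ← Finset.mul_sum,
      I1 s (fun i => (a i) ^ 2)]
    linear_combination (1 - (s.card : ℝ)) * (I2 s a)
  have hterm : ∀ P ∈ s.powersetCard 2, 0 ≤ 2 * (∑ i ∈ P, (a i) ^ 2) - (∑ i ∈ P, a i) ^ 2 := by
    intro P hP
    obtain ⟨u, v, huv, rfl⟩ := Finset.card_eq_two.1 (Finset.mem_powersetCard.1 hP).2
    rw [Finset.sum_pair huv, Finset.sum_pair huv]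
    nlinarith [sq_nonneg (a u - a v)]
  refine ⟨by nlinarith [Finset.sum_nonneg hterm, key], ?_, ?_⟩
  · intro he i hi j hj
    by_cases hij : i = j
    · rw [hij]
    have hz : ∑ P ∈ s.powersetCard 2, (2 * (∑ i ∈ P, (a i) ^ 2) - (∑ i ∈ P, a i) ^ 2) = 0 := by
      rw [← key]; linarith
    have hall := (Finset.sum_eq_zero_iff_of_nonneg hterm).1 hz
    have hmem : ({i, j} : Finset ι) ∈ s.powersetCard 2 := by
      rw [Finset.mem_powersetCard]
      refine ⟨fun z hz' => ?_, ?_⟩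
      · rcases Finset.mem_insert.1 hz' with rfl | hz'
        · exact hi
        · rwa [Finset.mem_singleton.1 hz']
      · rw [Finset.card_insert_of_notMem (by simp [hij]), Finset.card_singleton]
    have h0 := hall _ hmem
    rw [Finset.sum_pair hij, Finset.sum_pair hij] at h0
    nlinarith [h0]
  · intro hall
    rcases Finset.eq_empty_or_nonempty s with rfl | ⟨i0, hi0⟩
    · simp [pc2_empty]
    have hc : ∀ i ∈ s, a i = a i0 := fun i hi => hall i hi i0 hi0
    have h1 : ∑ i ∈ s, a i = s.card * a i0 := by
      rw [Finset.sum_congr rfl hc, Finset.sum_const, nsmul_eq_mul]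
    have hprod : ∀ P ∈ s.powersetCard 2, ∏ i ∈ P, a i = (a i0) ^ 2 := by
      intro P hP
      obtain ⟨hPs, hP2⟩ := Finset.mem_powersetCard.1 hP
      rw [Finset.prod_congr rfl (fun i hi => hc i (hPs hi)), Finset.prod_const, hP2]
    have h2 : ∑ P ∈ s.powersetCard 2, ∏ i ∈ P, a i =
        ((s.card.choose 2 : ℕ) : ℝ) * (a i0) ^ 2 := by
      rw [Finset.sum_congr rfl hprod, Finset.sum_const, nsmul_eq_mul,
        Finset.card_powersetCard]
    have hcc : ((s.card.choose 2 : ℕ) : ℝ) = (s.card : ℝ) * ((s.card : ℝ) - 1) / 2 :=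
      Nat.cast_choose_two (K := ℝ) s.card
    rw [h1, h2, hcc]
    ring
end VarLemmas

-- multiset of card n is the image of a function on Fin n
lemma multiset_exists_fun {α : Type*} (n : ℕ) (t : Multiset α) (ht : Multiset.card t = n) :
    ∃ y : Fin n → α, Multiset.map y Finset.univ.val = t := by
  obtain ⟨l, rfl⟩ : ∃ l : List α, (l : Multiset α) = t := ⟨t.toList, t.coe_toList⟩
  rw [Multiset.coe_card] at ht
  subst ht
  exact ⟨l.get, by rw [Fin.univ_val_map, List.ofFn_get]⟩

lemma prod_univ_eq_esymm_card {n : ℕ} (y : Fin n → ℝ) :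
    ∑ S ∈ (Finset.univ : Finset (Fin n)).powersetCard n, ∏ i ∈ S, y i = ∏ i, y i := by
  have : (Finset.univ : Finset (Fin n)).powersetCard n =
      {(Finset.univ : Finset (Fin n))} := by
    ext S
    simp only [Finset.mem_powersetCard, Finset.mem_singleton]
    constructor
    · rintro ⟨-, hc⟩
      exact S.eq_univ_of_card (by rw [hc, Fintype.card_fin])
    · rintro rfl
      exact ⟨Finset.subset_univ _, Finset.card_fin n⟩
  rw [this, Finset.sum_singleton]

lemma sum_erase_prod {n : ℕ} (hn : 1 ≤ n) (y : Fin n → ℝ) :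
    ∑ S ∈ (Finset.univ : Finset (Fin n)).powersetCard (n-1), ∏ i ∈ S, y i =
      ∑ i, ∏ j ∈ Finset.univ.erase i, y j := by
  have him : (Finset.univ : Finset (Fin n)).powersetCard (n-1) =
      Finset.image (fun i => Finset.univ.erase i) Finset.univ := by
    ext S
    simp only [Finset.mem_powersetCard, Finset.mem_image, Finset.mem_univ, true_and]
    constructor
    · rintro ⟨-, hcard⟩
      have hc : Sᶜ.card = 1 := by
        rw [Finset.card_compl, hcard, Fintype.card_fin]
        omega
      obtain ⟨i, hi⟩ := Finset.card_eq_one.1 hc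
      exact ⟨i, by rw [← Finset.compl_singleton, ← hi, compl_compl]⟩
    · rintro ⟨i, rfl⟩
      refine ⟨Finset.subset_univ _, ?_⟩
      rw [Finset.card_erase_of_mem (Finset.mem_univ i), Finset.card_fin]
  rw [him, Finset.sum_image]
  intro i _ j _ he
  by_contra hij
  have : i ∈ Finset.univ.erase j := Finset.mem_erase.2 ⟨hij, Finset.mem_univ i⟩
  rw [← (id he : Finset.univ.erase i = Finset.univ.erase j)] at this
  exact (Finset.mem_erase.1 this).1 rfl

lemma pair_compl_prod {n : ℕ} (y : Fin n → ℝ) {u v : Fin n} (huv : u ≠ v) :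
    (∏ j ∈ Finset.univ.erase u, y j) * ∏ j ∈ Finset.univ.erase v, y j =
      (∏ i, y i) * ∏ j ∈ ({u, v} : Finset (Fin n))ᶜ, y j := by
  have hvc : ({u, v} : Finset (Fin n))ᶜ = (Finset.univ.erase u).erase v := by
    ext z
    simp only [Finset.mem_compl, Finset.mem_insert, Finset.mem_singleton, Finset.mem_erase,
      Finset.mem_univ, and_true]
    tauto
  have h1 : ∏ j ∈ Finset.univ.erase u, y j = y v * ∏ j ∈ (Finset.univ.erase u).erase v, y j :=
    (Finset.mul_prod_erase _ _ (Finset.mem_erase.2 ⟨(Ne.symm huv), Finset.mem_univ v⟩)).symm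
  have h2 : ∏ j ∈ Finset.univ.erase v, y j = y u * ∏ j ∈ (Finset.univ.erase v).erase u, y j :=
    (Finset.mul_prod_erase _ _ (Finset.mem_erase.2 ⟨huv, Finset.mem_univ u⟩)).symm
  have h3 : (Finset.univ.erase v).erase u = (Finset.univ.erase u).erase v :=
    Finset.erase_right_comm
  have h4 : ∏ i, y i = y u * ∏ j ∈ Finset.univ.erase u, y j :=
    (Finset.mul_prod_erase _ _ (Finset.mem_univ u)).symm
  rw [hvc, h1, h2, h3, h4, h1]
  ring

lemma compl_sum {n r : ℕ} (hr : r ≤ n) (f : Finset (Fin n) → ℝ) :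
    ∑ P ∈ (Finset.univ : Finset (Fin n)).powersetCard r, f Pᶜ =
      ∑ T ∈ (Finset.univ : Finset (Fin n)).powersetCard (n - r), f T := by
  refine Finset.sum_nbij' (fun P => Pᶜ) (fun T => Tᶜ) ?_ ?_ ?_ ?_ ?_
  · intro P hP
    rw [Finset.mem_powersetCard] at hP ⊢
    refine ⟨Finset.subset_univ _, ?_⟩
    rw [Finset.card_compl, hP.2, Fintype.card_fin]
  · intro T hT
    rw [Finset.mem_powersetCard] at hT ⊢
    refine ⟨Finset.subset_univ _, ?_⟩
    rw [Finset.card_compl, hT.2, Fintype.card_fin]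
    omega
  · intro P _; exact compl_compl P
  · intro T _; exact compl_compl T
  · intro P _; rfl

lemma topNewton (n : ℕ) (hn : 2 ≤ n) (t : Multiset ℝ) (ht : Multiset.card t = n) :
    2 * (n : ℝ) * (t.esymm (n - 2) * t.esymm n) ≤ ((n : ℝ) - 1) * (t.esymm (n - 1)) ^ 2 := by
  obtain ⟨y, rfl⟩ := multiset_exists_fun n t ht
  have hE : ∀ i, (Multiset.map y Finset.univ.val).esymm i =
      ∑ S ∈ (Finset.univ : Finset (Fin n)).powersetCard i, ∏ j ∈ S, y j := fun i =>
    Finset.esymm_map_val y Finset.univ i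
  rw [hE, hE, hE, prod_univ_eq_esymm_card]
  set a : Fin n → ℝ := fun i => ∏ j ∈ Finset.univ.erase i, y j with ha
  have hA : ∑ S ∈ (Finset.univ : Finset (Fin n)).powersetCard (n-1), ∏ i ∈ S, y i =
      ∑ i, a i := sum_erase_prod (by omega) y
  have hB : ∑ P ∈ (Finset.univ : Finset (Fin n)).powersetCard 2, ∏ i ∈ P, a i =
      (∏ i, y i) * ∑ S ∈ (Finset.univ : Finset (Fin n)).powersetCard (n-2), ∏ i ∈ S, y i := by
    have hcongr : ∀ P ∈ (Finset.univ : Finset (Fin n)).powersetCard 2,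
        ∏ i ∈ P, a i = (∏ i, y i) * ∏ j ∈ Pᶜ, y j := by
      intro P hP
      obtain ⟨u, v, huv, rfl⟩ := Finset.card_eq_two.1 (Finset.mem_powersetCard.1 hP).2
      rw [Finset.prod_pair huv, ha]
      exact pair_compl_prod y huv
    rw [Finset.sum_congr rfl hcongr, ← Finset.mul_sum,
      compl_sum (by omega) (fun T => ∏ j ∈ T, y j)]
  have hK := (varK (Finset.univ : Finset (Fin n)) a).1
  rw [Finset.card_fin] at hK
  calc 2 * (n : ℝ) * ((∑ S ∈ (Finset.univ : Finset (Fin n)).powersetCard (n-2), ∏ i ∈ S, y i) *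
        ∏ i, y i)
      = 2 * (n : ℝ) * ∑ P ∈ (Finset.univ : Finset (Fin n)).powersetCard 2, ∏ i ∈ P, a i := by
        rw [hB]; ring
    _ ≤ ((n : ℝ) - 1) * (∑ i, a i) ^ 2 := hK
    _ = ((n : ℝ) - 1) * (∑ S ∈ (Finset.univ : Finset (Fin n)).powersetCard (n-1),
        ∏ i ∈ S, y i) ^ 2 := by rw [hA]

lemma newton (m j : ℕ) (hj : 1 ≤ j) (hjm : j + 1 ≤ m) (s : Multiset ℝ)
    (hs : Multiset.card s = m) :
    s.esymm (j-1) / (m.choose (j-1) : ℝ) * (s.esymm (j+1) / (m.choose (j+1) : ℝ)) ≤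
      (s.esymm j / (m.choose j : ℝ)) ^ 2 := by
  obtain ⟨t, ht, htj⟩ := descend m (m - (j+1)) (by omega) s hs
  have hmj : m - (m - (j+1)) = j + 1 := by omega
  rw [hmj] at ht htj
  have hTN := topNewton (j+1) (by omega) t ht
  have e1 : j + 1 - 2 = j - 1 := by omega
  have e2 : j + 1 - 1 = j := by omega
  rw [e1, e2] at hTN
  push_cast at hTN
  set jr : ℝ := (j : ℝ) with hjr
  set u := s.esymm (j-1) with hu
  set v := s.esymm j with hv
  set w := s.esymm (j+1) with hw
  set t1 := t.esymm (j-1) with ht1d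
  set t2 := t.esymm j with ht2d
  set t3 := t.esymm (j+1) with ht3d
  set c1 : ℝ := (m.choose (j-1) : ℝ) with hc1
  set c2 : ℝ := (m.choose j : ℝ) with hc2
  set c3 : ℝ := (m.choose (j+1) : ℝ) with hc3
  have hc1p : (0:ℝ) < c1 := by rw [hc1]; exact_mod_cast Nat.choose_pos (by omega)
  have hc2p : (0:ℝ) < c2 := by rw [hc2]; exact_mod_cast Nat.choose_pos (by omega)
  have hc3p : (0:ℝ) < c3 := by rw [hc3]; exact_mod_cast Nat.choose_pos (by omega)
  have hA1 : c1 * t1 = (((j+1).choose (j-1) : ℕ) : ℝ) * u := htj (j-1) (by omega)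
  have hA2 : c2 * t2 = (jr + 1) * v := by
    have h := htj j (by omega)
    rw [Nat.choose_succ_self_right] at h
    push_cast at h
    exact h
  have hA3 : c3 * t3 = w := by
    have h := htj (j+1) (by omega)
    rw [Nat.choose_self] at h
    push_cast at h
    linarith
  have hb1 : (((j+1).choose (j-1) : ℕ) : ℝ) * 2 = (jr + 1) * jr := by
    have hcs : (j+1).choose (j-1) = (j+1).choose 2 := by
      rw [← Nat.choose_symm (show j - 1 ≤ j + 1 by omega)]
      congr 1
      omega
    rw [hcs, Nat.cast_choose_two]
    push_cast
    ring
  set b1 : ℝ := (((j+1).choose (j-1) : ℕ) : ℝ) with hb1d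
  -- hTN : 2 * (jr + 1) * (t1 * t3) ≤ (jr + 1 - 1) * t2 ^ 2
  have hTN2 : 2 * (jr + 1) * (t1 * t3) * (c1 * c3 * c2^2) ≤
      (jr + 1 - 1) * t2 ^ 2 * (c1 * c3 * c2^2) :=
    mul_le_mul_of_nonneg_right hTN (by positivity)
  have hL : 2 * (jr + 1) * (t1 * t3) * (c1 * c3 * c2^2)
      = 2 * (jr + 1) * b1 * (u * w * c2^2) := by
    calc 2 * (jr + 1) * (t1 * t3) * (c1 * c3 * c2^2)
        = 2 * (jr + 1) * ((c1 * t1) * (c3 * t3)) * c2^2 := by ring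
      _ = 2 * (jr + 1) * ((b1 * u) * w) * c2^2 := by rw [hA1, hA3]
      _ = 2 * (jr + 1) * b1 * (u * w * c2^2) := by ring
  have hR : (jr + 1 - 1) * t2 ^ 2 * (c1 * c3 * c2^2)
      = jr * (jr + 1)^2 * (v^2 * (c1 * c3)) := by
    calc (jr + 1 - 1) * t2 ^ 2 * (c1 * c3 * c2^2)
        = jr * (c2 * t2)^2 * (c1 * c3) := by ring
      _ = jr * ((jr + 1) * v)^2 * (c1 * c3) := by rw [hA2]
      _ = jr * (jr + 1)^2 * (v^2 * (c1 * c3)) := by ring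
  rw [hL, hR] at hTN2
  have hP : 2 * (jr + 1) * b1 = jr * (jr + 1)^2 := by
    rw [hb1d]
    linear_combination (jr + 1) * hb1
  rw [hP] at hTN2
  have hPpos : (0:ℝ) < jr * (jr + 1)^2 := by
    have : (0:ℝ) < jr := by rw [hjr]; exact_mod_cast hj
    positivity
  have hfinal : u * w * c2^2 ≤ v^2 * (c1 * c3) := le_of_mul_le_mul_left hTN2 hPpos
  rw [div_mul_div_comm, div_pow, div_le_div_iff₀ (by positivity) (by positivity)]
  linarith [hfinal]

lemma telescope (M : ℕ) (p : ℕ → ℝ) (hp0 : p 0 = 1) (hnn : ∀ i, 0 ≤ p i)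
    (hdeg : ∀ j, j + 1 ≤ M → p j = 0 → p (j+1) = 0)
    (hN : ∀ j, 1 ≤ j → j + 1 ≤ M → p (j-1) * p (j+1) ≤ p j ^ 2) :
    ∀ k, 1 ≤ k → k + 1 ≤ M →
      p (k+1) ^ k ≤ p k ^ (k+1) ∧
      (0 < p (k+1) → p (k+1) ^ k = p k ^ (k+1) → p 2 = p 1 ^ 2) := by
  intro k
  induction k with
  | zero => intro h; omega
  | succ k ih =>
    intro _ hM
    rw [show k + 1 + 1 = k + 2 by rfl]
    by_cases hk : k = 0
    · subst hk
      have h := hN 1 le_rfl (by omega)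
      norm_num [hp0] at h ⊢
      exact h
    · have hk1 : 1 ≤ k := by omega
      obtain ⟨ihle, iheq⟩ := ih hk1 (by omega)
      set a := p k
      set b := p (k+1) with hbdef
      set c := p (k+2) with hcdef
      have hNk : a * c ≤ b ^ 2 := by
        have h := hN (k+1) (by omega) (by omega)
        simpa using h
      by_cases hz : b = 0
      · have hz2 : c = 0 := hdeg (k+1) (by omega) hz
        rw [hz, hz2]
        constructor
        · rw [zero_pow (by omega : k + 1 ≠ 0), zero_pow (by omega : k + 2 ≠ 0)]
        · intro h; exact absurd h (lt_irrefl 0)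
      · have hb : 0 < b := (hnn (k+1)).lt_of_ne (Ne.symm hz)
        have ha : 0 ≤ a := hnn k
        have hc : 0 ≤ c := hnn (k+2)
        have step1' : a ^ (k+1) * c ^ (k+1) ≤ b ^ (2*(k+1)) := by
          calc a ^ (k+1) * c ^ (k+1) = (a*c) ^ (k+1) := by rw [mul_pow]
            _ ≤ (b^2) ^ (k+1) := pow_le_pow_left₀ (by positivity) hNk (k+1)
            _ = b ^ (2*(k+1)) := by rw [← pow_mul]
        have step2 : b ^ k * c ^ (k+1) ≤ a ^ (k+1) * c ^ (k+1) :=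
          mul_le_mul_of_nonneg_right ihle (by positivity)
        have key2 : b ^ k * c ^ (k+1) ≤ b ^ k * b ^ (k+2) := by
          have key : b ^ k * c ^ (k+1) ≤ b ^ (k + (k+2)) := by
            rw [show k + (k+2) = 2*(k+1) by omega]
            exact le_trans step2 step1'
          rw [← pow_add]
          exact key
        have hbk : (0:ℝ) < b ^ k := by positivity
        refine ⟨le_of_mul_le_mul_left key2 hbk, fun hcpos heq => ?_⟩
        have hmid : a ^ (k+1) * c ^ (k+1) = b ^ (2*(k+1)) := by
          have hend : b ^ k * c ^ (k+1) = b ^ (2*(k+1)) := by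
            rw [heq, ← pow_add]
            congr 1
            omega
          have h2 : b ^ (2*(k+1)) ≤ a ^ (k+1) * c ^ (k+1) := by
            rw [← hend]
            exact step2
          linarith [step1']
        have hceq : a ^ (k+1) = b ^ k := by
          have hcp : (0:ℝ) < c ^ (k+1) := by positivity
          refine mul_right_cancel₀ hcp.ne' ?_
          rw [hmid, heq, ← pow_add]
          congr 1
          omega
        exact iheq hb hceq.symm

set_option maxHeartbeats 2000000 in
/-- Maclaurin's inequality for nonnegative reals. Let `1 ≤ k < m` and let
`x₁, …, x_m ≥ 0`. Then `(σ_m^k(x)/C(m,k))^{1/k} ≥ (σ_m^{k+1}(x)/C(m,k+1))^{1/(k+1)}`, where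
`σ_m^j` is the `j`-th elementary symmetric polynomial, with equality if and only if all the
`xᵢ` are equal or at least `m - k + 1` of them are zero. -/
theorem maclaurin_nonneg (m k : ℕ) (hk : 1 ≤ k) (hkm : k < m)
    (x : Fin m → ℝ) (hx : ∀ i, 0 ≤ x i) :
    ((∑ S ∈ (Finset.univ : Finset (Fin m)).powersetCard (k + 1), ∏ i ∈ S, x i) /
        (m.choose (k + 1) : ℝ)) ^ ((1 : ℝ) / (k + 1)) ≤
      ((∑ S ∈ (Finset.univ : Finset (Fin m)).powersetCard k, ∏ i ∈ S, x i) /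
        (m.choose k : ℝ)) ^ ((1 : ℝ) / k) ∧
    (((∑ S ∈ (Finset.univ : Finset (Fin m)).powersetCard k, ∏ i ∈ S, x i) /
        (m.choose k : ℝ)) ^ ((1 : ℝ) / k) =
      ((∑ S ∈ (Finset.univ : Finset (Fin m)).powersetCard (k + 1), ∏ i ∈ S, x i) /
        (m.choose (k + 1) : ℝ)) ^ ((1 : ℝ) / (k + 1)) ↔
      (∀ i j, x i = x j) ∨
        m - k + 1 ≤ (Finset.univ.filter fun i => x i = 0).card) := by
  have hm1 : 1 ≤ m := by omega
  set s : Multiset ℝ := Multiset.map x Finset.univ.val with hsdef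
  have hs : Multiset.card s = m := by
    rw [hsdef, Multiset.card_map]
    simp
  have hE : ∀ i, s.esymm i =
      ∑ S ∈ (Finset.univ : Finset (Fin m)).powersetCard i, ∏ j ∈ S, x j :=
    fun i => Finset.esymm_map_val x Finset.univ i
  set p : ℕ → ℝ := fun i => s.esymm i / (m.choose i : ℝ) with hpdef
  have hEnn : ∀ i, 0 ≤ s.esymm i := fun i => by
    rw [hE]
    exact Finset.sum_nonneg fun S _ => Finset.prod_nonneg fun i _ => hx i
  have hpnn : ∀ i, 0 ≤ p i := fun i =>
    div_nonneg (hEnn i) (Nat.cast_nonneg _)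
  have hp0 : p 0 = 1 := by
    rw [hpdef]
    simp only [Nat.choose_zero_right, Nat.cast_one, div_one]
    rw [hE 0, Finset.powersetCard_zero, Finset.sum_singleton, Finset.prod_empty]
  have hcpos : ∀ i, i ≤ m → (0:ℝ) < (m.choose i : ℝ) := fun i hi => by
    exact_mod_cast Nat.choose_pos hi
  have hEzero_of_p : ∀ i, i ≤ m → p i = 0 → s.esymm i = 0 := by
    intro i hi hp
    have := hcpos i hi
    rw [hpdef] at hp
    simp only [div_eq_zero_iff] at hp
    rcases hp with h | h
    · exact h
    · exact absurd h this.ne'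
  have hdegp : ∀ j, j + 1 ≤ m → p j = 0 → p (j+1) = 0 := by
    intro j hj hpj
    have hEj : s.esymm j = 0 := hEzero_of_p j (by omega) hpj
    rw [hE j] at hEj
    have hterms := (Finset.sum_eq_zero_iff_of_nonneg
      (fun S _ => Finset.prod_nonneg fun i _ => hx i)).1 hEj
    have hEj1 : s.esymm (j+1) = 0 := by
      rw [hE (j+1)]
      refine Finset.sum_eq_zero fun T hT => ?_
      obtain ⟨hTu, hTc⟩ := Finset.mem_powersetCard.1 hT
      obtain ⟨S, hST, hSc⟩ := Finset.exists_subset_card_eq (show j ≤ T.card by omega)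
      have hSmem : S ∈ (Finset.univ : Finset (Fin m)).powersetCard j :=
        Finset.mem_powersetCard.2 ⟨Finset.subset_univ _, hSc⟩
      rw [← Finset.prod_sdiff hST, hterms S hSmem, mul_zero]
    rw [hpdef]
    simp [hEj1]
  have hnewt : ∀ j, 1 ≤ j → j + 1 ≤ m → p (j-1) * p (j+1) ≤ p j ^ 2 :=
    fun j h1 h2 => newton m j h1 h2 s hs
  have tel := telescope m p hp0 hpnn hdegp hnewt k hk (by omega)
  have hgoalrw : ∀ j, (∑ S ∈ (Finset.univ : Finset (Fin m)).powersetCard j, ∏ i ∈ S, x i) /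
      (m.choose j : ℝ) = p j := fun j => by
    show _ = s.esymm j / (m.choose j : ℝ)
    rw [hE j]
  rw [hgoalrw k, hgoalrw (k+1)]
  set a := p k with hadef
  set b := p (k+1) with hbdef
  have ha : 0 ≤ a := hpnn k
  have hb : 0 ≤ b := hpnn (k+1)
  have hkr : (0:ℝ) < (k:ℝ) := by exact_mod_cast hk
  have hea : (1:ℝ)/(k:ℝ) = ((k+1 : ℕ) : ℝ) * ((1:ℝ)/((k:ℝ)*((k:ℝ)+1))) := by
    push_cast
    field_simp
  have heb : (1:ℝ)/((k:ℝ)+1) = ((k : ℕ) : ℝ) * ((1:ℝ)/((k:ℝ)*((k:ℝ)+1))) := by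
    push_cast
    rw [one_div, one_div, eq_comm, mul_comm]
    field_simp
  have expa : a ^ ((1:ℝ)/(k:ℝ)) = (a ^ (k+1 : ℕ)) ^ ((1:ℝ)/((k:ℝ)*((k:ℝ)+1))) := by
    rw [← Real.rpow_natCast a (k+1), ← Real.rpow_mul ha, ← hea]
  have expb : b ^ ((1:ℝ)/((k:ℝ)+1)) = (b ^ (k : ℕ)) ^ ((1:ℝ)/((k:ℝ)*((k:ℝ)+1))) := by
    rw [← Real.rpow_natCast b k, ← Real.rpow_mul hb, ← heb]
  constructor
  · rw [expa, expb]
    exact Real.rpow_le_rpow (by positivity) tel.1 (by positivity)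
  constructor
  · -- equality implies all equal or many zeros
    intro he
    by_cases hbz : b = 0
    · right
      have hbz' : b ^ ((1:ℝ)/((k:ℝ)+1)) = 0 := by
        rw [hbz, Real.zero_rpow (by positivity : (1:ℝ)/((k:ℝ)+1) ≠ 0)]
      rw [hbz'] at he
      have haz : a = 0 := by
        have := (Real.rpow_eq_zero_iff_of_nonneg ha).1 he
        exact this.1
      have hEk : s.esymm k = 0 := hEzero_of_p k (by omega) haz
      by_contra hlt
      push_neg at hlt
      set Z := Finset.univ.filter fun i => x i = 0 with hZ
      set N := Finset.univ.filter fun i => ¬ (x i = 0) with hN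
      have hcards : Z.card + N.card = m := by
        rw [hZ, hN, Finset.card_filter_add_card_filter_not]
        simp
      have hNk : k ≤ N.card := by omega
      obtain ⟨S, hSN, hSc⟩ := Finset.exists_subset_card_eq hNk
      have hprodpos : 0 < ∏ i ∈ S, x i := by
        refine Finset.prod_pos fun i hi => ?_
        have := Finset.mem_filter.1 (hSN hi)
        exact (hx i).lt_of_ne (Ne.symm this.2)
      have hle : ∏ i ∈ S, x i ≤ s.esymm k := by
        rw [hE k]
        exact Finset.single_le_sum (f := fun T => ∏ i ∈ T, x i)
          (fun T _ => Finset.prod_nonneg fun i _ => hx i)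
          (Finset.mem_powersetCard.2 ⟨Finset.subset_univ _, hSc⟩)
      linarith [hEk ▸ hle]
    · left
      have hbpos : 0 < b := hb.lt_of_ne (Ne.symm hbz)
      -- from he derive b^k = a^(k+1)
      have hcast : ((k:ℝ)*((k:ℝ)+1)) ≠ 0 := by positivity
      have h1 := congrArg (fun z : ℝ => z ^ ((k:ℝ)*((k:ℝ)+1))) he
      rw [← Real.rpow_mul ha, ← Real.rpow_mul hb] at h1
      have ea : (1:ℝ)/(k:ℝ) * ((k:ℝ)*((k:ℝ)+1)) = ((k+1 : ℕ) : ℝ) := by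
        push_cast
        field_simp
      have eb : (1:ℝ)/((k:ℝ)+1) * ((k:ℝ)*((k:ℝ)+1)) = ((k : ℕ) : ℝ) := by
        push_cast
        field_simp
      rw [ea, eb, Real.rpow_natCast, Real.rpow_natCast] at h1
      have heq : b ^ k = a ^ (k+1) := h1.symm
      have hp21 : p 2 = p 1 ^ 2 := tel.2 hbpos heq
      -- variance argument
      have hm2 : 2 ≤ m := by omega
      have hE1 : s.esymm 1 = ∑ i, x i := by
        rw [hE 1, pc1_sum]
        simp
      have hveq : 2 * (m:ℝ) * s.esymm 2 = ((m:ℝ) - 1) * (∑ i, x i) ^ 2 := by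
        have h2 : s.esymm 2 / (m.choose 2 : ℝ) = (s.esymm 1 / (m.choose 1 : ℝ)) ^ 2 := hp21
        rw [Nat.cast_choose_two, Nat.choose_one_right] at h2
        have hmr : (0:ℝ) < (m:ℝ) := by exact_mod_cast hm1
        have hmr1 : (0:ℝ) < (m:ℝ) - 1 := by
          have : (2:ℝ) ≤ (m:ℝ) := by exact_mod_cast hm2
          linarith
        rw [← hE1]
        field_simp at h2
        nlinarith [h2]
      have hvar := (varK (Finset.univ : Finset (Fin m)) x).2
      rw [Finset.card_fin] at hvar
      have hall := hvar.1 (by rw [← hE 2]; exact hveq)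
      exact fun i j => hall i (Finset.mem_univ i) j (Finset.mem_univ j)
  · -- reverse direction
    intro hor
    rcases hor with hall | hzero
    · set i0 : Fin m := ⟨0, by omega⟩
      set c := x i0 with hc
      have hc0 : 0 ≤ c := hx i0
      have hEj : ∀ j, s.esymm j = (m.choose j : ℝ) * c ^ j := by
        intro j
        rw [hE j]
        have hconst : ∀ S ∈ (Finset.univ : Finset (Fin m)).powersetCard j,
            ∏ i ∈ S, x i = c ^ j := by
          intro S hS
          rw [Finset.prod_congr rfl (fun i _ => hall i i0), Finset.prod_const,
            (Finset.mem_powersetCard.1 hS).2]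
        rw [Finset.sum_congr rfl hconst, Finset.sum_const, nsmul_eq_mul,
          Finset.card_powersetCard, Finset.card_fin]
      have hak : a = c ^ k := by
        rw [hadef]
        show s.esymm k / (m.choose k : ℝ) = c ^ k
        rw [hEj k, mul_comm, mul_div_assoc, div_self (hcpos k (by omega)).ne', mul_one]
      have hbk : b = c ^ (k+1) := by
        rw [hbdef]
        show s.esymm (k+1) / (m.choose (k+1) : ℝ) = c ^ (k+1)
        rw [hEj (k+1), mul_comm, mul_div_assoc, div_self (hcpos (k+1) (by omega)).ne', mul_one]
      rw [hak, hbk]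
      rw [← Real.rpow_natCast c k, ← Real.rpow_natCast c (k+1),
        ← Real.rpow_mul hc0, ← Real.rpow_mul hc0]
      congr 1
      push_cast
      field_simp
    · -- many zeros
      have hprodzero : ∀ (r : ℕ), k ≤ r →
          ∀ S ∈ (Finset.univ : Finset (Fin m)).powersetCard r, ∏ i ∈ S, x i = 0 := by
        intro r hr S hS
        set Z := Finset.univ.filter fun i => x i = 0 with hZdef
        obtain ⟨hSu, hSc⟩ := Finset.mem_powersetCard.1 hS
        have hunion : (S ∪ Z).card + (S ∩ Z).card = S.card + Z.card :=
          Finset.card_union_add_card_inter S Z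
        have hle : (S ∪ Z).card ≤ m := by
          calc (S ∪ Z).card ≤ Fintype.card (Fin m) := Finset.card_le_univ _
            _ = m := Fintype.card_fin m
        obtain ⟨i, hi⟩ := Finset.card_pos.1 (show 0 < (S ∩ Z).card by omega)
        have hiS : i ∈ S := (Finset.mem_inter.1 hi).1
        have hiZ : x i = 0 := (Finset.mem_filter.1 (Finset.mem_inter.1 hi).2).2
        exact Finset.prod_eq_zero hiS hiZ
      have hEk : s.esymm k = 0 := by
        rw [hE k]
        exact Finset.sum_eq_zero (hprodzero k le_rfl)
      have hEk1 : s.esymm (k+1) = 0 := by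
        rw [hE (k+1)]
        exact Finset.sum_eq_zero (hprodzero (k+1) (by omega))
      have haz : a = 0 := by
        rw [hadef]
        show s.esymm k / (m.choose k : ℝ) = 0
        rw [hEk, zero_div]
      have hbz : b = 0 := by
        rw [hbdef]
        show s.esymm (k+1) / (m.choose (k+1) : ℝ) = 0
        rw [hEk1, zero_div]
      rw [haz, hbz, Real.zero_rpow (by positivity : (1:ℝ)/((k:ℝ)) ≠ 0),
        Real.zero_rpow (by positivity : (1:ℝ)/((k:ℝ)+1) ≠ 0)]
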